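/- For an ideal I of 𝕂̃ the following are equivalent: (1) I is idempotent, i.e., I² = I; (2) I is radical, i.e., for all x ∈ 𝕂̃, x² ∈ I implies x ∈ I; (3) for every x ∈ I, the class of the net (√|x_ε|)_ε (for any representative (x_ε)_ε of x) belongs to I; (4) I is an intersection of prime ideals of 𝕂̃. -/

import Mathlib

noncomputable section

set_option maxHeartbeats 1000000
set_option synthInstance.maxHeartbeats 400000

open scoped Classical

/-- The index set `(0,1) ⊆ ℝ` of the nets. -/
abbrev Eps : Type := Set.Ioo (0:ℝ) 1

variable (K : Type) [RCLike K]

/-- A net `(x_ε)_{ε ∈ (0,1)}` is moderate if `|x_ε| ≤ ε^a` for some `a ∈ ℝ`,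
for all sufficiently small `ε`. -/
def IsModerate (x : Eps → K) : Prop :=
  ∃ a : ℝ, ∃ ε₀ ∈ Set.Ioo (0:ℝ) 1, ∀ ε : Eps, (ε : ℝ) ≤ ε₀ → ‖x ε‖ ≤ (ε : ℝ) ^ a

/-- A net `(x_ε)_{ε ∈ (0,1)}` is negligible if for every `a ∈ ℝ`, `|x_ε| ≤ ε^a`
for all sufficiently small `ε`. -/
def IsNegligible (x : Eps → K) : Prop :=
  ∀ a : ℝ, ∃ ε₀ ∈ Set.Ioo (0:ℝ) 1, ∀ ε : Eps, (ε : ℝ) ≤ ε₀ → ‖x ε‖ ≤ (ε : ℝ) ^ a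

theorem rpow_two_bound {ε : ℝ} (h0 : 0 < ε) (h2 : ε ≤ 1/2) (a b : ℝ) :
    ε ^ a + ε ^ b ≤ ε ^ (min a b - 1) := by
  have h1 : ε ≤ 1 := h2.trans (by norm_num)
  have ha : ε ^ a ≤ ε ^ min a b :=
    Real.rpow_le_rpow_of_exponent_ge h0 h1 (min_le_left a b)
  have hb : ε ^ b ≤ ε ^ min a b :=
    Real.rpow_le_rpow_of_exponent_ge h0 h1 (min_le_right a b)
  have key : 2 * ε ^ min a b ≤ ε ^ (min a b - 1) := by
    rw [Real.rpow_sub h0, Real.rpow_one, le_div_iff₀ h0]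
    have hx : (0:ℝ) ≤ ε ^ min a b := (Real.rpow_pos_of_pos h0 _).le
    calc 2 * ε ^ min a b * ε ≤ 2 * ε ^ min a b * (1/2) := by
          apply mul_le_mul_of_nonneg_left h2 (by positivity)
      _ = ε ^ min a b := by ring
  calc ε ^ a + ε ^ b ≤ 2 * ε ^ min a b := by linarith
    _ ≤ ε ^ (min a b - 1) := key

/-- The ring of moderate nets, as a subring of `K^{(0,1)}`. -/
def Moderate : Subring (Eps → K) where
  carrier := {x | IsModerate K x}
  zero_mem' := by
    refine ⟨0, 1/2, by constructor <;> norm_num, fun ε _ => ?_⟩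
    simp [Real.rpow_zero]
  one_mem' := by
    refine ⟨0, 1/2, by constructor <;> norm_num, fun ε _ => ?_⟩
    simp [Real.rpow_zero]
  add_mem' := by
    rintro x y ⟨a, ε₀, h₀, ha⟩ ⟨b, ε₁, h₁, hb⟩
    refine ⟨min a b - 1, min (min ε₀ ε₁) (1/2), ⟨lt_min (lt_min h₀.1 h₁.1) (by norm_num), ?_⟩,
      fun ε hε => ?_⟩
    · calc min (min ε₀ ε₁) (1/2) ≤ 1/2 := min_le_right _ _
        _ < 1 := by norm_num
    · have hε₀ : (ε:ℝ) ≤ ε₀ := le_trans hε (le_trans (min_le_left _ _) (min_le_left _ _))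
      have hε₁ : (ε:ℝ) ≤ ε₁ := le_trans hε (le_trans (min_le_left _ _) (min_le_right _ _))
      have hε2 : (ε:ℝ) ≤ 1/2 := le_trans hε (min_le_right _ _)
      calc ‖(x + y) ε‖ ≤ ‖x ε‖ + ‖y ε‖ := norm_add_le _ _
        _ ≤ (ε:ℝ) ^ a + (ε:ℝ) ^ b := add_le_add (ha ε hε₀) (hb ε hε₁)
        _ ≤ (ε:ℝ) ^ (min a b - 1) := rpow_two_bound ε.2.1 hε2 a b
  neg_mem' := by
    rintro x ⟨a, ε₀, h₀, ha⟩
    exact ⟨a, ε₀, h₀, fun ε hε => by simpa using ha ε hε⟩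
  mul_mem' := by
    rintro x y ⟨a, ε₀, h₀, ha⟩ ⟨b, ε₁, h₁, hb⟩
    refine ⟨a + b, min ε₀ ε₁, ⟨lt_min h₀.1 h₁.1, lt_of_le_of_lt (min_le_left _ _) h₀.2⟩,
      fun ε hε => ?_⟩
    have hε₀ : (ε:ℝ) ≤ ε₀ := le_trans hε (min_le_left _ _)
    have hε₁ : (ε:ℝ) ≤ ε₁ := le_trans hε (min_le_right _ _)
    calc ‖(x * y) ε‖ = ‖x ε‖ * ‖y ε‖ := norm_mul _ _
      _ ≤ (ε:ℝ) ^ a * (ε:ℝ) ^ b :=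
        mul_le_mul (ha ε hε₀) (hb ε hε₁) (norm_nonneg _) (Real.rpow_pos_of_pos ε.2.1 _).le
      _ = (ε:ℝ) ^ (a + b) := (Real.rpow_add ε.2.1 _ _).symm

theorem mem_moderate {f : Eps → K} (h : IsModerate K f) : f ∈ Moderate K := h

/-- The ideal of negligible nets in the ring of moderate nets. -/
def Negligible : Ideal (Moderate K) where
  carrier := {x | IsNegligible K (x : Eps → K)}
  zero_mem' := by
    intro a
    refine ⟨1/2, by constructor <;> norm_num, fun ε _ => ?_⟩
    have : (0:ℝ) ≤ (ε:ℝ) ^ a := (Real.rpow_pos_of_pos ε.2.1 _).le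
    simpa using this
  add_mem' := by
    intro x y hx hy a
    obtain ⟨ε₀, h₀, ha⟩ := hx (a + 1)
    obtain ⟨ε₁, h₁, hb⟩ := hy (a + 1)
    refine ⟨min (min ε₀ ε₁) (1/2), ⟨lt_min (lt_min h₀.1 h₁.1) (by norm_num), ?_⟩, fun ε hε => ?_⟩
    · calc min (min ε₀ ε₁) (1/2) ≤ 1/2 := min_le_right _ _
        _ < 1 := by norm_num
    · have hε₀ : (ε:ℝ) ≤ ε₀ := le_trans hε (le_trans (min_le_left _ _) (min_le_left _ _))
      have hε₁ : (ε:ℝ) ≤ ε₁ := le_trans hε (le_trans (min_le_left _ _) (min_le_right _ _))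
      have hε2 : (ε:ℝ) ≤ 1/2 := le_trans hε (min_le_right _ _)
      have hbd := rpow_two_bound (ε := (ε:ℝ)) ε.2.1 hε2 (a+1) (a+1)
      simp only [min_self, add_sub_cancel_right] at hbd
      calc ‖((x + y : Moderate K) : Eps → K) ε‖ ≤ ‖(x : Eps → K) ε‖ + ‖(y : Eps → K) ε‖ := by
            push_cast
            exact norm_add_le _ _
        _ ≤ (ε:ℝ) ^ (a+1) + (ε:ℝ) ^ (a+1) := add_le_add (ha ε hε₀) (hb ε hε₁)
        _ ≤ (ε:ℝ) ^ a := hbd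
  smul_mem' := by
    intro c x hx
    show IsNegligible K ((c * x : Moderate K) : Eps → K)
    intro a
    obtain ⟨b, ε₀, h₀, hc⟩ := c.property
    obtain ⟨ε₁, h₁, hxa⟩ := hx (a - b)
    refine ⟨min ε₀ ε₁, ⟨lt_min h₀.1 h₁.1, lt_of_le_of_lt (min_le_left _ _) h₀.2⟩,
      fun ε hε => ?_⟩
    have hε₀ : (ε:ℝ) ≤ ε₀ := le_trans hε (min_le_left _ _)
    have hε₁ : (ε:ℝ) ≤ ε₁ := le_trans hε (min_le_right _ _)
    calc ‖((c * x : Moderate K) : Eps → K) ε‖ = ‖(c : Eps → K) ε‖ * ‖(x : Eps → K) ε‖ := by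
          push_cast
          exact norm_mul _ _
      _ ≤ (ε:ℝ) ^ b * (ε:ℝ) ^ (a - b) :=
        mul_le_mul (hc ε hε₀) (hxa ε hε₁) (norm_nonneg _) (Real.rpow_pos_of_pos ε.2.1 _).le
      _ = (ε:ℝ) ^ a := by rw [← Real.rpow_add ε.2.1]; ring_nf

/-- The ring of Colombeau generalized numbers: the quotient of the ring of
moderate nets by the ideal of negligible nets. -/
abbrev CGen : Type := Moderate K ⧸ Negligible K

/-- The quotient map. -/
abbrev cmk : Moderate K →+* CGen K := Ideal.Quotient.mk (Negligible K)

/-- A canonical representative of a Colombeau generalized number. -/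
def rep (x : CGen K) : Moderate K := (Ideal.Quotient.mk_surjective x).choose

theorem rep_spec (x : CGen K) : cmk K (rep K x) = x :=
  (Ideal.Quotient.mk_surjective x).choose_spec

theorem indicator_moderate (S : Set Eps) :
    IsModerate K (fun ε => if ε ∈ S then (1:K) else 0) := by
  refine ⟨0, 1/2, by constructor <;> norm_num, fun ε _ => ?_⟩
  rw [Real.rpow_zero]
  by_cases h : ε ∈ S <;> simp [h]

/-- `e_S`: the generalized number given by the characteristic function of `S ⊆ (0,1)`. -/
def eS (S : Set Eps) : CGen K :=
  cmk K ⟨fun ε => if ε ∈ S then (1:K) else 0, mem_moderate K (indicator_moderate K S)⟩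

theorem absNet_moderate (f : Moderate K) :
    IsModerate K (fun ε => ((‖(f : Eps → K) ε‖ : ℝ) : K)) := by
  obtain ⟨a, ε₀, h₀, h⟩ := f.property
  refine ⟨a, ε₀, h₀, fun ε hε => ?_⟩
  simpa [RCLike.norm_ofReal, abs_norm] using h ε hε

/-- `|x|`: the class of the net `(|x_ε|)_ε` (for any representative of `x`). -/
def absC (x : CGen K) : CGen K :=
  cmk K ⟨_, mem_moderate K (absNet_moderate K (rep K x))⟩

theorem minNet_moderate (f g : Moderate K) :
    IsModerate K (fun ε => ((min ‖(f : Eps → K) ε‖ ‖(g : Eps → K) ε‖ : ℝ) : K)) := by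
  obtain ⟨a, ε₀, h₀, h⟩ := f.property
  refine ⟨a, ε₀, h₀, fun ε hε => ?_⟩
  rw [RCLike.norm_ofReal, abs_of_nonneg (le_min (norm_nonneg _) (norm_nonneg _))]
  exact le_trans (min_le_left _ _) (h ε hε)

/-- `|x| ∧ |y|`: the class of the pointwise minimum of `(|x_ε|)_ε` and `(|y_ε|)_ε`. -/
def infAbs (x y : CGen K) : CGen K :=
  cmk K ⟨_, mem_moderate K (minNet_moderate K (rep K x) (rep K y))⟩

theorem sqrtNet_moderate (f : Moderate K) :
    IsModerate K (fun ε => ((Real.sqrt ‖(f : Eps → K) ε‖ : ℝ) : K)) := by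
  obtain ⟨a, ε₀, h₀, h⟩ := f.property
  refine ⟨a / 2, ε₀, h₀, fun ε hε => ?_⟩
  rw [RCLike.norm_ofReal, abs_of_nonneg (Real.sqrt_nonneg _)]
  calc Real.sqrt ‖(f : Eps → K) ε‖ ≤ Real.sqrt ((ε:ℝ) ^ a) := Real.sqrt_le_sqrt (h ε hε)
    _ = (ε:ℝ) ^ (a / 2) := by
        rw [Real.sqrt_eq_rpow, ← Real.rpow_mul ε.2.1.le]
        ring_nf

/-- `√|x|`: the class of the net `(√|x_ε|)_ε` (for any representative of `x`). -/
def sqrtAbs (x : CGen K) : CGen K :=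
  cmk K ⟨_, mem_moderate K (sqrtNet_moderate K (rep K x))⟩

/-- The annihilator `Ann(a) = {x : x·a = 0}` as an ideal. -/
def annIdeal (a : CGen K) : Ideal (CGen K) where
  carrier := {x | x * a = 0}
  zero_mem' := by simp
  add_mem' := by
    intro x y hx hy
    show (x + y) * a = 0
    rw [add_mul, hx, hy, add_zero]
  smul_mem' := by
    intro c x hx
    show c * x * a = 0
    rw [mul_assoc, hx, mul_zero]

/-- The order relation on `𝕂̃`: `x ≤ y` iff there exist (real-valued) representatives
`(u_ε)_ε` of `x` and `(v_ε)_ε` of `y` with `u_ε ≤ v_ε` for all `ε`. -/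
def leC (x y : CGen K) : Prop :=
  ∃ u v : Moderate K, cmk K u = x ∧ cmk K v = y ∧
    ∀ ε : Eps, ∃ r s : ℝ, (u : Eps → K) ε = (r : K) ∧ (v : Eps → K) ε = (s : K) ∧ r ≤ s

/-- A z-ideal: if `b ∈ I` and `a` belongs to exactly the same maximal ideals as `b`,
then `a ∈ I`. -/
def IsZIdeal (I : Ideal (CGen K)) : Prop :=
  ∀ a b : CGen K, b ∈ I →
    (∀ M : Ideal (CGen K), M.IsMaximal → (a ∈ M ↔ b ∈ M)) → a ∈ I


/-! ### Auxiliary material for `stmt3` -/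

theorem my_sqrt_add_le {x y : ℝ} (hx : 0 ≤ x) (hy : 0 ≤ y) :
    Real.sqrt (x + y) ≤ Real.sqrt x + Real.sqrt y := by
  rw [Real.sqrt_le_iff]
  constructor
  · positivity
  · nlinarith [Real.sq_sqrt hx, Real.sq_sqrt hy, Real.sqrt_nonneg x, Real.sqrt_nonneg y]

theorem my_abs_sqrt_sub_sqrt {a b : ℝ} (ha : 0 ≤ a) (hb : 0 ≤ b) :
    |Real.sqrt a - Real.sqrt b| ≤ Real.sqrt |a - b| := by
  have key : ∀ s t : ℝ, 0 ≤ s → 0 ≤ t → t ≤ s →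
      Real.sqrt s - Real.sqrt t ≤ Real.sqrt (s - t) := by
    intro s t hs ht hts
    have h1 : Real.sqrt s ≤ Real.sqrt t + Real.sqrt (s - t) := by
      calc Real.sqrt s = Real.sqrt (t + (s - t)) := by ring_nf
        _ ≤ Real.sqrt t + Real.sqrt (s - t) := my_sqrt_add_le ht (by linarith)
    linarith
  rcases le_total b a with h | h
  · rw [abs_of_nonneg (sub_nonneg.2 h), abs_of_nonneg
      (sub_nonneg.2 (Real.sqrt_le_sqrt h))]
    exact key a b ha hb h
  · rw [abs_of_nonpos (sub_nonpos.2 h), abs_of_nonpos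
      (sub_nonpos.2 (Real.sqrt_le_sqrt h)), neg_sub, neg_sub]
    exact key b a hb ha h

/-- The moderate net `(|f_ε|)_ε` as an element of `Moderate K`. -/
def absMod (f : Moderate K) : Moderate K :=
  ⟨fun ε => ((‖(f : Eps → K) ε‖ : ℝ) : K), mem_moderate K (absNet_moderate K f)⟩

/-- The moderate net `(√|f_ε|)_ε` as an element of `Moderate K`. -/
def sqrtMod (f : Moderate K) : Moderate K :=
  ⟨fun ε => ((Real.sqrt ‖(f : Eps → K) ε‖ : ℝ) : K), mem_moderate K (sqrtNet_moderate K f)⟩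

theorem sqrtAbs_eq (x : CGen K) : sqrtAbs K x = cmk K (sqrtMod K (rep K x)) := rfl

/-- Interleaving lemma: if `‖u_ε‖ ≤ ‖w_ε‖` for small `ε`, then the class of `u`
belongs to the principal ideal generated by the class of `w`. -/
theorem lemmaA (u w : Moderate K) (ε₀ : ℝ) (hε₀ : ε₀ ∈ Set.Ioo (0:ℝ) 1)
    (h : ∀ ε : Eps, (ε : ℝ) ≤ ε₀ → ‖(u : Eps → K) ε‖ ≤ ‖(w : Eps → K) ε‖) :
    cmk K u ∈ Ideal.span {cmk K w} := by
  set hnet : Eps → K := fun ε =>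
    if (ε : ℝ) ≤ ε₀ ∧ (w : Eps → K) ε ≠ 0 then (u : Eps → K) ε / (w : Eps → K) ε else 0
    with hnet_def
  have hmod : IsModerate K hnet := by
    refine ⟨0, ε₀, hε₀, fun ε hε => ?_⟩
    rw [Real.rpow_zero]
    by_cases hc : (ε : ℝ) ≤ ε₀ ∧ (w : Eps → K) ε ≠ 0
    · show ‖if (ε : ℝ) ≤ ε₀ ∧ (w : Eps → K) ε ≠ 0 then (u : Eps → K) ε / (w : Eps → K) ε else 0‖ ≤ 1
      rw [if_pos hc, norm_div, div_le_one (norm_pos_iff.2 hc.2)]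
      exact h ε hc.1
    · show ‖if (ε : ℝ) ≤ ε₀ ∧ (w : Eps → K) ε ≠ 0 then (u : Eps → K) ε / (w : Eps → K) ε else 0‖ ≤ 1
      rw [if_neg hc, norm_zero]
      norm_num
  have key : cmk K u = cmk K ⟨hnet, mem_moderate K hmod⟩ * cmk K w := by
    rw [← map_mul, Ideal.Quotient.eq]
    intro a
    refine ⟨ε₀, hε₀, fun ε hε => ?_⟩
    have hval : ((u - ⟨hnet, mem_moderate K hmod⟩ * w : Moderate K) : Eps → K) ε
        = (u : Eps → K) ε - hnet ε * (w : Eps → K) ε := rfl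
    have hz : (u : Eps → K) ε - hnet ε * (w : Eps → K) ε = 0 := by
      by_cases hw : (w : Eps → K) ε = 0
      · have hu : (u : Eps → K) ε = 0 := by
          have := h ε hε
          rw [hw, norm_zero] at this
          exact norm_le_zero_iff.1 this
        rw [hu, hw, mul_zero, sub_zero]
      · show (u : Eps → K) ε -
            (if (ε : ℝ) ≤ ε₀ ∧ (w : Eps → K) ε ≠ 0 then (u : Eps → K) ε / (w : Eps → K) ε else 0)
              * (w : Eps → K) ε = 0
        rw [if_pos ⟨hε, hw⟩, div_mul_cancel₀ _ hw, sub_self]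
    rw [hval, hz, norm_zero]
    exact (Real.rpow_pos_of_pos ε.2.1 _).le
  rw [key]
  exact Ideal.mul_mem_left _ _ (Ideal.mem_span_singleton_self _)

theorem norm_absMod (f : Moderate K) (ε : Eps) :
    ‖((absMod K f : Moderate K) : Eps → K) ε‖ = ‖(f : Eps → K) ε‖ := by
  show ‖((‖(f : Eps → K) ε‖ : ℝ) : K)‖ = _
  rw [RCLike.norm_ofReal, abs_norm]

theorem norm_sqrtMod (f : Moderate K) (ε : Eps) :
    ‖((sqrtMod K f : Moderate K) : Eps → K) ε‖ = Real.sqrt ‖(f : Eps → K) ε‖ := by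
  show ‖((Real.sqrt ‖(f : Eps → K) ε‖ : ℝ) : K)‖ = _
  rw [RCLike.norm_ofReal, abs_of_nonneg (Real.sqrt_nonneg _)]

theorem absMod_mem_span (f : Moderate K) :
    cmk K (absMod K f) ∈ Ideal.span {cmk K f} := by
  refine lemmaA K _ _ (1/2) (by constructor <;> norm_num) (fun ε _ => ?_)
  rw [norm_absMod]

theorem mem_span_absMod (f : Moderate K) :
    cmk K f ∈ Ideal.span {cmk K (absMod K f)} := by
  refine lemmaA K _ _ (1/2) (by constructor <;> norm_num) (fun ε _ => ?_)
  rw [norm_absMod]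

/-- `√|·|` is well defined on classes. -/
theorem sqrtMod_congr {u v : Moderate K} (h : u - v ∈ Negligible K) :
    cmk K (sqrtMod K u) = cmk K (sqrtMod K v) := by
  rw [Ideal.Quotient.eq]
  intro a
  obtain ⟨ε₀, hε₀, hn⟩ := h (2 * a)
  refine ⟨ε₀, hε₀, fun ε hε => ?_⟩
  have hval : ((sqrtMod K u - sqrtMod K v : Moderate K) : Eps → K) ε
      = ((Real.sqrt ‖(u : Eps → K) ε‖ - Real.sqrt ‖(v : Eps → K) ε‖ : ℝ) : K) := by
    show ((Real.sqrt ‖(u : Eps → K) ε‖ : ℝ) : K) - ((Real.sqrt ‖(v : Eps → K) ε‖ : ℝ) : K) = _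
    rw [RCLike.ofReal_sub]
  have hsubval : ((u - v : Moderate K) : Eps → K) ε = (u : Eps → K) ε - (v : Eps → K) ε := rfl
  have h1 : |Real.sqrt ‖(u : Eps → K) ε‖ - Real.sqrt ‖(v : Eps → K) ε‖|
      ≤ Real.sqrt ‖(u : Eps → K) ε - (v : Eps → K) ε‖ := by
    refine le_trans (my_abs_sqrt_sub_sqrt (norm_nonneg _) (norm_nonneg _)) ?_
    exact Real.sqrt_le_sqrt (abs_norm_sub_norm_le _ _)
  have h2 : Real.sqrt ‖(u : Eps → K) ε - (v : Eps → K) ε‖ ≤ (ε : ℝ) ^ a := by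
    have := hn ε hε
    rw [hsubval] at this
    calc Real.sqrt ‖(u : Eps → K) ε - (v : Eps → K) ε‖
        ≤ Real.sqrt ((ε : ℝ) ^ (2 * a)) := Real.sqrt_le_sqrt this
      _ = (ε : ℝ) ^ a := by
          rw [Real.sqrt_eq_rpow, ← Real.rpow_mul ε.2.1.le]
          congr 1
          ring
  rw [hval, RCLike.norm_ofReal]
  exact le_trans h1 h2

theorem sqrtMod_mul_self (f : Moderate K) :
    cmk K (sqrtMod K f) * cmk K (sqrtMod K f) = cmk K (absMod K f) := by
  rw [← map_mul]
  congr 1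
  apply Subtype.ext
  funext ε
  show ((Real.sqrt ‖(f : Eps → K) ε‖ : ℝ) : K) * ((Real.sqrt ‖(f : Eps → K) ε‖ : ℝ) : K)
      = ((‖(f : Eps → K) ε‖ : ℝ) : K)
  rw [← RCLike.ofReal_mul, Real.mul_self_sqrt (norm_nonneg _)]

/-- From `x·x ∈ I` for doubling, squares descend. -/
theorem sq_descend {R : Type*} [CommRing R] (I : Ideal R)
    (h2 : ∀ x : R, x * x ∈ I → x ∈ I) :
    ∀ n : ℕ, ∀ x : R, x ^ n ∈ I → n ≠ 0 → x ∈ I := by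
  intro n
  induction n using Nat.strong_induction_on with
  | _ n ih =>
    intro x hx hn
    rcases eq_or_ne n 1 with h1 | h1
    · rwa [h1, pow_one] at hx
    · have hn2 : 2 ≤ n := by omega
      set k := (n + 1) / 2 with hk
      have hk1 : k ≠ 0 := by omega
      have hkn : k < n := by omega
      have h2k : n + (2 * k - n) = 2 * k := by omega
      have hpow : x ^ (2 * k) ∈ I := by
        rw [← h2k, pow_add]
        exact Ideal.mul_mem_right _ _ hx
      have hsq : x ^ k * x ^ k ∈ I := by
        rw [← pow_add]
        have : k + k = 2 * k := by omega
        rwa [this]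
      exact ih k hkn x (h2 _ hsq) hk1


theorem stmt3 (I : Ideal (CGen K)) :
    List.TFAE [I * I = I,
      ∀ x : CGen K, x * x ∈ I → x ∈ I,
      ∀ x ∈ I, sqrtAbs K x ∈ I,
      ∃ Ps : Set (Ideal (CGen K)), (∀ P ∈ Ps, P.IsPrime) ∧ I = sInf Ps] := by
  tfae_have 1 → 3 := by
    intro h1 x hx
    rw [← h1] at hx
    have hP : ∃ u w : Moderate K, cmk K u = x ∧ cmk K w ∈ I ∧
        ∃ ε₀ ∈ Set.Ioo (0:ℝ) 1, ∀ ε : Eps, (ε : ℝ) ≤ ε₀ →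
          Real.sqrt ‖(u : Eps → K) ε‖ ≤ ‖(w : Eps → K) ε‖ := by
      refine Submodule.mul_induction_on hx ?_ ?_
      · intro a ha b hb
        refine ⟨rep K a * rep K b, absMod K (rep K a) + absMod K (rep K b),
          by rw [map_mul, rep_spec, rep_spec], ?_, 1/2, by constructor <;> norm_num,
          fun ε _ => ?_⟩
        · rw [map_add]
          refine Ideal.add_mem _ ?_ ?_
          · have := absMod_mem_span K (rep K a)
            rw [rep_spec] at this
            exact (Ideal.span_singleton_le_iff_mem _).2 ha this
          · have := absMod_mem_span K (rep K b)
            rw [rep_spec] at this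
            exact (Ideal.span_singleton_le_iff_mem _).2 hb this
        · set s := ‖((rep K a : Moderate K) : Eps → K) ε‖ with hs
          set t := ‖((rep K b : Moderate K) : Eps → K) ε‖ with ht
          have hval : ‖((rep K a * rep K b : Moderate K) : Eps → K) ε‖ = s * t := by
            show ‖((rep K a : Moderate K) : Eps → K) ε * ((rep K b : Moderate K) : Eps → K) ε‖ = _
            rw [norm_mul]
          have hwval : ‖((absMod K (rep K a) + absMod K (rep K b) : Moderate K) : Eps → K) ε‖
              = s + t := by
            show ‖((s : ℝ) : K) + ((t : ℝ) : K)‖ = _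
            rw [← RCLike.ofReal_add, RCLike.norm_ofReal,
              abs_of_nonneg (by positivity)]
          rw [hval, hwval]
          have hs0 : 0 ≤ s := norm_nonneg _
          have ht0 : 0 ≤ t := norm_nonneg _
          rw [Real.sqrt_mul hs0]
          nlinarith [sq_nonneg (Real.sqrt s - Real.sqrt t), Real.sq_sqrt hs0,
            Real.sq_sqrt ht0, Real.sqrt_nonneg s, Real.sqrt_nonneg t]
      · rintro z₁ z₂ ⟨u₁, w₁, hu₁, hw₁, ε₁, hε₁, hb₁⟩ ⟨u₂, w₂, hu₂, hw₂, ε₂, hε₂, hb₂⟩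
        refine ⟨u₁ + u₂, absMod K w₁ + absMod K w₂,
          by rw [map_add, hu₁, hu₂], ?_, min ε₁ ε₂,
          ⟨lt_min hε₁.1 hε₂.1, lt_of_le_of_lt (min_le_left _ _) hε₁.2⟩, fun ε hε => ?_⟩
        · rw [map_add]
          refine Ideal.add_mem _ ?_ ?_
          · exact (Ideal.span_singleton_le_iff_mem _).2 hw₁ (absMod_mem_span K w₁)
          · exact (Ideal.span_singleton_le_iff_mem _).2 hw₂ (absMod_mem_span K w₂)
        · have hεa : (ε : ℝ) ≤ ε₁ := le_trans hε (min_le_left _ _)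
          have hεb : (ε : ℝ) ≤ ε₂ := le_trans hε (min_le_right _ _)
          set s := ‖(u₁ : Eps → K) ε‖ with hs
          set t := ‖(u₂ : Eps → K) ε‖ with ht
          have hval : ‖((u₁ + u₂ : Moderate K) : Eps → K) ε‖ ≤ s + t := by
            show ‖(u₁ : Eps → K) ε + (u₂ : Eps → K) ε‖ ≤ _
            exact norm_add_le _ _
          have hwval : ‖((absMod K w₁ + absMod K w₂ : Moderate K) : Eps → K) ε‖
              = ‖(w₁ : Eps → K) ε‖ + ‖(w₂ : Eps → K) ε‖ := by
            show ‖((‖(w₁ : Eps → K) ε‖ : ℝ) : K) + ((‖(w₂ : Eps → K) ε‖ : ℝ) : K)‖ = _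
            rw [← RCLike.ofReal_add, RCLike.norm_ofReal,
              abs_of_nonneg (by positivity)]
          rw [hwval]
          calc Real.sqrt ‖((u₁ + u₂ : Moderate K) : Eps → K) ε‖
              ≤ Real.sqrt (s + t) := Real.sqrt_le_sqrt hval
            _ ≤ Real.sqrt s + Real.sqrt t :=
                my_sqrt_add_le (norm_nonneg _) (norm_nonneg _)
            _ ≤ ‖(w₁ : Eps → K) ε‖ + ‖(w₂ : Eps → K) ε‖ :=
                add_le_add (hb₁ ε hεa) (hb₂ ε hεb)
    obtain ⟨u, w, hux, hwI, ε₀, hε₀, hb⟩ := hP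
    have hcongr : cmk K (sqrtMod K u) = sqrtAbs K x := by
      rw [sqrtAbs_eq]
      refine sqrtMod_congr K ?_
      rw [← Ideal.Quotient.eq]
      rw [hux, rep_spec]
    have hmem : cmk K (sqrtMod K u) ∈ Ideal.span {cmk K w} := by
      refine lemmaA K _ _ ε₀ hε₀ (fun ε hε => ?_)
      rw [norm_sqrtMod]
      exact hb ε hε
    rw [hcongr] at hmem
    exact (Ideal.span_singleton_le_iff_mem _).2 hwI hmem
  tfae_have 3 → 1 := by
    intro h3
    refine le_antisymm Ideal.mul_le_right ?_
    intro x hx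
    have hs := h3 x hx
    have hid : sqrtAbs K x * sqrtAbs K x = cmk K (absMod K (rep K x)) := by
      rw [sqrtAbs_eq]; exact sqrtMod_mul_self K (rep K x)
    have hxmem : x ∈ Ideal.span {sqrtAbs K x * sqrtAbs K x} := by
      rw [hid]
      have := mem_span_absMod K (rep K x)
      rwa [rep_spec] at this
    exact (Ideal.span_singleton_le_iff_mem _).2 (Ideal.mul_mem_mul hs hs) hxmem
  tfae_have 3 → 2 := by
    intro h3 x hxx
    have hs := h3 _ hxx
    have hneg : rep K x * rep K x - rep K (x * x) ∈ Negligible K := by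
      rw [← Ideal.Quotient.eq]
      rw [map_mul, rep_spec, rep_spec]
    have hveq : cmk K (sqrtMod K (rep K x * rep K x)) = sqrtAbs K (x * x) := by
      rw [sqrtAbs_eq]
      exact sqrtMod_congr K hneg
    have hmem : cmk K (rep K x) ∈ Ideal.span {cmk K (sqrtMod K (rep K x * rep K x))} := by
      refine lemmaA K _ _ (1/2) (by constructor <;> norm_num) (fun ε _ => ?_)
      rw [norm_sqrtMod]
      have : ‖((rep K x * rep K x : Moderate K) : Eps → K) ε‖
          = ‖((rep K x : Moderate K) : Eps → K) ε‖ * ‖((rep K x : Moderate K) : Eps → K) ε‖ := by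
        show ‖((rep K x : Moderate K) : Eps → K) ε * ((rep K x : Moderate K) : Eps → K) ε‖ = _
        rw [norm_mul]
      rw [this, Real.sqrt_mul_self (norm_nonneg _)]
    rw [hveq, rep_spec] at hmem
    exact (Ideal.span_singleton_le_iff_mem _).2 hs hmem
  tfae_have 2 → 3 := by
    intro h2 x hx
    refine h2 _ ?_
    have hid : sqrtAbs K x * sqrtAbs K x = cmk K (absMod K (rep K x)) := by
      rw [sqrtAbs_eq]; exact sqrtMod_mul_self K (rep K x)
    rw [hid]
    have := absMod_mem_span K (rep K x)
    rw [rep_spec] at this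
    exact (Ideal.span_singleton_le_iff_mem _).2 hx this
  tfae_have 2 → 4 := by
    intro h2
    refine ⟨{J | I ≤ J ∧ J.IsPrime}, fun P hP => hP.2, ?_⟩
    rw [← Ideal.radical_eq_sInf]
    refine le_antisymm Ideal.le_radical ?_
    intro x hx
    obtain ⟨n, hn⟩ := hx
    rcases eq_or_ne n 0 with h0 | h0
    · rw [h0, pow_zero] at hn
      have htop : I = ⊤ := (Ideal.eq_top_iff_one I).2 hn
      rw [htop]
      exact Submodule.mem_top
    · exact sq_descend I h2 n x hn h0
  tfae_have 4 → 2 := by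
    rintro ⟨Ps, hprime, rfl⟩ x hx
    rw [Submodule.mem_sInf] at hx ⊢
    intro P hP
    exact ((hprime P hP).mem_or_mem (hx P hP)).elim id id
  tfae_finish


end
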